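/- For every m ∈ ℝ, the strict sublevel set of ρ satisfies {X ∈ 𝒳 : ρ(X) < m} = int_{−U}(𝒜 + ker π) − m·U = 𝒜 + ker π + {t·U : t > 0} − m·U, and this set is contained in 𝒜 + ker π − m·U. -/

import Mathlib

open Pointwise

/-- The risk measure associated with acceptance set `A`, eligible payoffs `M`
and pricing functional `π` (infimum in the extended reals, `sInf ∅ = +∞`). -/
noncomputable def rho {X : Type*} [AddCommGroup X] [Module ℝ X]
    (M : Submodule ℝ X) (π : M →ₗ[ℝ] ℝ) (A : Set X) (x : X) : EReal :=
  sInf {r : EReal | ∃ Z : M, x + (Z : X) ∈ A ∧ ((π Z : ℝ) : EReal) = r}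

/-- The kernel of the pricing functional `π`, viewed as a subset of `X`. -/
def kerSet {X : Type*} [AddCommGroup X] [Module ℝ X]
    (M : Submodule ℝ X) (π : M →ₗ[ℝ] ℝ) : Set X :=
  Subtype.val '' {Z : M | π Z = 0}

/-- `K`-directional closure of `S`. -/
def clK {X : Type*} [AddCommGroup X] [Module ℝ X] (K : X) (S : Set X) : Set X :=
  {x : X | ∀ l : ℝ, 0 < l → ∃ t : ℝ, 0 ≤ t ∧ t < l ∧ x - t • K ∈ S}

/-- `K`-directional interior of `S`. -/
def intK {X : Type*} [AddCommGroup X] [Module ℝ X] (K : X) (S : Set X) : Set X :=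
  {x : X | ∃ l : ℝ, 0 < l ∧ ∀ t : ℝ, 0 ≤ t → t ≤ l → x + t • K ∈ S}

/-- `K`-directional boundary of `S`. -/
def bdK {X : Type*} [AddCommGroup X] [Module ℝ X] (K : X) (S : Set X) : Set X :=
  clK K S \ intK K S

/-- Recession cone of `S`. -/
def recCone {X : Type*} [AddCommGroup X] [Module ℝ X] (S : Set X) : Set X :=
  {v : X | ∀ y ∈ S, ∀ l : ℝ, 0 ≤ l → y + l • v ∈ S}

theorem stmt_8 {X : Type*} [AddCommGroup X] [Module ℝ X]
(Xpos : Set X)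
    (hXpos0 : (0 : X) ∈ Xpos)
    (hXposSmul : ∀ t : ℝ, 0 ≤ t → ∀ x ∈ Xpos, t • x ∈ Xpos)
    (hXposConv : Convex ℝ Xpos)
    (hXposPointed : ∀ x ∈ Xpos, -x ∈ Xpos → x = 0)
    (M : Submodule ℝ X) (π : M →ₗ[ℝ] ℝ)
    (U : M) (hUpos : (U : X) ∈ Xpos) (hU1 : π U = 1)
    (A : Set X) (hA0 : (0 : X) ∈ A) (hAne : A ≠ Set.univ) (hAmono : A + Xpos ⊆ A) :
    ∀ m : ℝ,
      ({x : X | rho M π A x < (m : EReal)}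
          = (fun y => y - m • (U : X)) '' intK (-(U : X)) (A + kerSet M π)) ∧
      ((fun y => y - m • (U : X)) '' intK (-(U : X)) (A + kerSet M π)
          = (fun y => y - m • (U : X)) ''
              (A + kerSet M π + {x : X | ∃ t : ℝ, 0 < t ∧ x = t • (U : X)})) ∧
      {x : X | rho M π A x < (m : EReal)}
          ⊆ (fun y => y - m • (U : X)) '' (A + kerSet M π) := by
  intro m
  have hBU : ∀ b ∈ A + kerSet M π, ∀ s : ℝ, 0 ≤ s →
      b + s • (U : X) ∈ A + kerSet M π := by
    rintro b ⟨a, ha, z, ⟨W, hW0, rfl⟩, rfl⟩ s hs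
    exact ⟨a + s • (U : X),
      hAmono ⟨a, ha, s • (U : X), hXposSmul s hs _ hUpos, rfl⟩,
      (W : X), ⟨W, hW0, rfl⟩, add_right_comm _ _ _⟩
  have key : ∀ x : X, rho M π A x < (m : EReal) ↔
      ∃ Z : M, x + (Z : X) ∈ A ∧ π Z < m := by
    intro x
    constructor
    · intro h
      rw [rho, sInf_lt_iff] at h
      obtain ⟨r, ⟨Z, hZA, hr⟩, hrm⟩ := h
      refine ⟨Z, hZA, ?_⟩
      rw [← hr] at hrm
      exact_mod_cast hrm
    · rintro ⟨Z, hZA, hZm⟩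
      exact lt_of_le_of_lt (sInf_le ⟨Z, hZA, rfl⟩) (by exact_mod_cast hZm)
  have hIntSub : intK (-(U : X)) (A + kerSet M π) ⊆ A + kerSet M π := by
    rintro x ⟨l, hl, hall⟩
    have := hall 0 le_rfl hl.le
    simpa using this
  have h1 : {x : X | rho M π A x < (m : EReal)}
      = (fun y => y - m • (U : X)) '' intK (-(U : X)) (A + kerSet M π) := by
    ext x
    simp only [Set.mem_setOf_eq, Set.mem_image]
    rw [key x]
    constructor
    · rintro ⟨Z, hZA, hZm⟩
      refine ⟨x + m • (U : X), ⟨m - π Z, by linarith, ?_⟩, by show x + m • (U : X) - m • (U : X) = x; abel⟩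
      intro t ht htl
      have heq : x + m • (U : X) + t • (-(U : X))
          = ((x + (Z : X)) + (m - t - π Z) • (U : X)) + ((π Z • (U : X)) - (Z : X)) := by
        module
      rw [heq]
      refine ⟨(x + (Z : X)) + (m - t - π Z) • (U : X),
        hAmono ⟨x + (Z : X), hZA, (m - t - π Z) • (U : X),
          hXposSmul _ (by linarith) _ hUpos, rfl⟩,
        (π Z • (U : X)) - (Z : X), ⟨π Z • U - Z, by simp [hU1], by simp⟩, rfl⟩
    · rintro ⟨y, ⟨l, hl, hall⟩, rfl⟩
      obtain ⟨a, ha, z, ⟨W, hW0, rfl⟩, heq⟩ := hall l hl.le le_rfl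
      refine ⟨(m - l) • U - W, ?_, ?_⟩
      · have : y - m • (U : X) + ((m - l) • U - W : M) = a := by
          have h2 : a + (W : X) = y + l • (-(U : X)) := heq
          have : ((((m - l) • U - W : M) : X)) = (m - l) • (U : X) - (W : X) := by simp
          rw [this]
          have := h2
          -- a = y + l • (-U) - W
          have ha' : a = y + l • (-(U : X)) - (W : X) := by
            rw [← h2]; abel
          rw [ha']
          module
        rw [this]; exact ha
      · have hW0' : π W = 0 := hW0
        simp [hU1, hW0']; linarith
  have hset : intK (-(U : X)) (A + kerSet M π)
      = A + kerSet M π + {x : X | ∃ t : ℝ, 0 < t ∧ x = t • (U : X)} := by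
    ext x
    constructor
    · rintro ⟨l, hl, hall⟩
      have hmem : x + l • (-(U : X)) ∈ A + kerSet M π := hall l hl.le le_rfl
      exact ⟨x + l • (-(U : X)), hmem, l • (U : X), ⟨l, hl, rfl⟩, by module⟩
    · rintro ⟨b, hb, v, ⟨t, ht, rfl⟩, rfl⟩
      refine ⟨t, ht, fun s hs hst => ?_⟩
      have heq : b + t • (U : X) + s • (-(U : X)) = b + (t - s) • (U : X) := by module
      rw [heq]
      exact hBU b hb (t - s) (by linarith)
  refine ⟨h1, by rw [hset], ?_⟩
  · intro x hx
    rw [h1] at hx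
    obtain ⟨y, hy, rfl⟩ := hx
    exact ⟨y, hIntSub hy, rfl⟩
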